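/- Let A ∈ ℝ^{m×n}, b ∈ ℝᵐ, τ > 0, ν > 0 and w ∈ ℝⁿ. (i) If there exists y ∈ ℝᵐ with (A Aᵀ) y = A w + b and ‖y‖₂ ≤ ν τ, then w − Aᵀ y is a global minimizer of u ↦ (1/(2ν))‖u − w‖₂² + τ‖A u + b‖₂ over ℝⁿ. (ii) If α* > 0 satisfies ‖(A Aᵀ + α* I)⁻¹ (A w + b)‖₂ = ν τ, then w − Aᵀ (A Aᵀ + α* I)⁻¹ (A w + b) is the unique global minimizer of u ↦ (1/(2ν))‖u − w‖₂² + τ‖A u + b‖₂ over ℝⁿ. -/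

import Mathlib

open Matrix

/-- The Euclidean (`ℓ₂`) norm of a vector in `Fin k → ℝ`. -/
noncomputable def norm2 {k : ℕ} (v : Fin k → ℝ) : ℝ := Real.sqrt (∑ i, v i ^ 2)



lemma norm2_nonneg {k : ℕ} (v : Fin k → ℝ) : 0 ≤ norm2 v := Real.sqrt_nonneg _

lemma norm2_sq {k : ℕ} (v : Fin k → ℝ) : norm2 v ^ 2 = ∑ i, v i ^ 2 :=
  Real.sq_sqrt (Finset.sum_nonneg fun i _ => sq_nonneg _)

lemma norm2_smul {k : ℕ} (c : ℝ) (hc : 0 ≤ c) (v : Fin k → ℝ) :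
    norm2 (c • v) = c * norm2 v := by
  unfold norm2
  have : ∑ i, (c • v) i ^ 2 = c ^ 2 * ∑ i, v i ^ 2 := by
    rw [Finset.mul_sum]; exact Finset.sum_congr rfl fun i _ => by simp [mul_pow]
  rw [this, Real.sqrt_mul (sq_nonneg c), Real.sqrt_sq hc]

lemma norm2_pos_of_ne_zero {k : ℕ} {v : Fin k → ℝ} (hv : v ≠ 0) : 0 < norm2 v ^ 2 := by
  rw [norm2_sq]
  rcases Function.ne_iff.mp hv with ⟨i, hi⟩
  exact Finset.sum_pos' (fun j _ => sq_nonneg _) ⟨i, Finset.mem_univ i, by simpa using pow_pos (abs_pos.mpr hi) 2⟩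

lemma cauchy {k : ℕ} (f g : Fin k → ℝ) : ∑ i, f i * g i ≤ norm2 f * norm2 g := by
  have h := Finset.sum_mul_sq_le_sq_mul_sq Finset.univ f g
  calc ∑ i, f i * g i ≤ |∑ i, f i * g i| := le_abs_self _
    _ = Real.sqrt ((∑ i, f i * g i) ^ 2) := (Real.sqrt_sq_eq_abs _).symm
    _ ≤ Real.sqrt ((∑ i, f i ^ 2) * ∑ i, g i ^ 2) := Real.sqrt_le_sqrt h
    _ = norm2 f * norm2 g := Real.sqrt_mul (Finset.sum_nonneg fun i _ => sq_nonneg _) _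


/-- Proximal objective `u ↦ (1/(2ν))‖u − w‖₂² + τ‖Au + b‖₂`. -/
noncomputable def proxObj {m n : ℕ} (A : Matrix (Fin m) (Fin n) ℝ) (b : Fin m → ℝ)
    (τ ν : ℝ) (w : Fin n → ℝ) (u : Fin n → ℝ) : ℝ :=
  1 / (2 * ν) * norm2 (u - w) ^ 2 + τ * norm2 (A.mulVec u + b)

lemma key {m n : ℕ} (A : Matrix (Fin m) (Fin n) ℝ) (b : Fin m → ℝ)
    (τ ν : ℝ) (hν : 0 < ν) (w : Fin n → ℝ) (y : Fin m → ℝ) (α : ℝ) (hα : 0 ≤ α)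
    (hc : A.mulVec (w - Aᵀ.mulVec y) + b = α • y)
    (hy : norm2 y ≤ ν * τ)
    (hαy : α * norm2 y ^ 2 = α * (ν * τ) * norm2 y)
    (u : Fin n → ℝ) :
    proxObj A b τ ν w (w - Aᵀ.mulVec y) + 1 / (2 * ν) * norm2 (u - (w - Aᵀ.mulVec y)) ^ 2
      ≤ proxObj A b τ ν w u := by
  set z := Aᵀ.mulVec y with hz
  set d := u - (w - z) with hd
  -- expansion of ‖u - w‖²
  have hexp : norm2 (u - w) ^ 2 = norm2 d ^ 2 - 2 * ∑ i, d i * z i + norm2 z ^ 2 := by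
    simp only [norm2_sq]
    rw [Finset.mul_sum, ← Finset.sum_sub_distrib, ← Finset.sum_add_distrib]
    refine Finset.sum_congr rfl fun i _ => ?_
    have : (u - w) i = d i - z i := by simp only [hd, Pi.sub_apply]; ring
    rw [this]; ring
  -- dot product identity
  have hdot : ∑ i, d i * z i = (∑ i, (A.mulVec u + b) i * y i) - α * norm2 y ^ 2 := by
    have h1 : ∑ i, d i * z i = d ⬝ᵥ (Aᵀ.mulVec y) := rfl
    rw [h1, Matrix.dotProduct_mulVec, Matrix.vecMul_transpose]
    have h2 : A.mulVec d = (A.mulVec u + b) - α • y := by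
      rw [hd, Matrix.mulVec_sub, ← hc]; abel
    rw [h2]
    simp only [dotProduct, Pi.sub_apply, Pi.add_apply, Pi.smul_apply, smul_eq_mul,
      sub_mul, Finset.sum_sub_distrib]
    rw [norm2_sq, Finset.mul_sum]
    congr 1
    exact Finset.sum_congr rfl fun i _ => by ring
  -- Cauchy–Schwarz bound
  have hN : 0 ≤ norm2 (A.mulVec u + b) := norm2_nonneg _
  have hCS : ∑ i, (A.mulVec u + b) i * y i ≤ norm2 (A.mulVec u + b) * (ν * τ) := by
    calc ∑ i, (A.mulVec u + b) i * y i ≤ norm2 (A.mulVec u + b) * norm2 y := cauchy _ _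
      _ ≤ norm2 (A.mulVec u + b) * (ν * τ) := mul_le_mul_of_nonneg_left hy hN
  -- values at the candidate minimizer
  have hval1 : norm2 ((w - z) - w) ^ 2 = norm2 z ^ 2 := by
    simp only [norm2_sq]
    exact Finset.sum_congr rfl fun i _ => by simp only [Pi.sub_apply]; ring
  have hval2 : norm2 (A.mulVec (w - z) + b) = α * norm2 y := by
    rw [hc, norm2_smul α hα]
  unfold proxObj
  rw [hval1, hval2, hexp, hdot]
  have hν' : (0:ℝ) < 1 / (2 * ν) := by positivity
  have key2 : (∑ i, (A.mulVec u + b) i * y i) / ν ≤ τ * norm2 (A.mulVec u + b) := by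
    rw [div_le_iff₀ hν]
    calc ∑ i, (A.mulVec u + b) i * y i ≤ norm2 (A.mulVec u + b) * (ν * τ) := hCS
      _ = τ * norm2 (A.mulVec u + b) * ν := by ring
  have hrw : 1 / (2 * ν) * (2 * (α * norm2 y ^ 2)) = τ * (α * norm2 y) := by
    rw [hαy]; field_simp
  have hdist : 1 / (2 * ν) * (norm2 d ^ 2 - 2 * ((∑ i, (A.mulVec u + b) i * y i) - α * norm2 y ^ 2) + norm2 z ^ 2)
      = 1 / (2 * ν) * norm2 d ^ 2 + 1 / (2 * ν) * norm2 z ^ 2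
        - (∑ i, (A.mulVec u + b) i * y i) / ν + 1 / (2 * ν) * (2 * (α * norm2 y ^ 2)) := by
    field_simp; ring
  linarith [hdist, hrw, key2]


/-- **Corollary `cor:prox` (proximal operator of `u ↦ τ‖Au + b‖₂`).**
(i) If `(AAᵀ)y = Aw + b` with `‖y‖₂ ≤ ντ`, then `w − Aᵀy` is a global minimizer of
`u ↦ (1/(2ν))‖u − w‖₂² + τ‖Au + b‖₂`.
(ii) If `α* > 0` with `‖(AAᵀ + α*I)⁻¹(Aw + b)‖₂ = ντ`, then
`w − Aᵀ(AAᵀ + α*I)⁻¹(Aw + b)` is its unique global minimizer. -/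
theorem stmt_16 {m n : ℕ} (A : Matrix (Fin m) (Fin n) ℝ) (b : Fin m → ℝ)
    (τ ν : ℝ) (hτ : 0 < τ) (hν : 0 < ν) (w : Fin n → ℝ) :
    (∀ y : Fin m → ℝ, (A * Aᵀ).mulVec y = A.mulVec w + b → norm2 y ≤ ν * τ →
      ∀ u : Fin n → ℝ, proxObj A b τ ν w (w - Aᵀ.mulVec y) ≤ proxObj A b τ ν w u) ∧
    (∀ αstar : ℝ, 0 < αstar →
      norm2 ((A * Aᵀ + αstar • (1 : Matrix (Fin m) (Fin m) ℝ))⁻¹.mulVec (A.mulVec w + b))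
        = ν * τ →
      ∀ u : Fin n → ℝ,
        u ≠ w - Aᵀ.mulVec ((A * Aᵀ + αstar • (1 : Matrix (Fin m) (Fin m) ℝ))⁻¹.mulVec
              (A.mulVec w + b)) →
        proxObj A b τ ν w (w - Aᵀ.mulVec ((A * Aᵀ + αstar •
              (1 : Matrix (Fin m) (Fin m) ℝ))⁻¹.mulVec (A.mulVec w + b)))
          < proxObj A b τ ν w u) := by
  constructor
  · intro y hy hnorm u
    have hc : A.mulVec (w - Aᵀ.mulVec y) + b = (0:ℝ) • y := by
      rw [Matrix.mulVec_sub, Matrix.mulVec_mulVec, hy, zero_smul]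
      abel
    have hk := key A b τ ν hν w y 0 le_rfl hc hnorm (by simp) u
    have hpos : 0 ≤ 1 / (2 * ν) * norm2 (u - (w - Aᵀ.mulVec y)) ^ 2 := by
      have := norm2_nonneg (u - (w - Aᵀ.mulVec y))
      positivity
    linarith
  · intro αstar hαstar hnorm u hne
    set M := A * Aᵀ + αstar • (1 : Matrix (Fin m) (Fin m) ℝ) with hM
    set v := A.mulVec w + b with hv
    set y := M⁻¹.mulVec v with hy
    have hpd : M.PosDef := by
      refine Matrix.PosDef.posSemidef_add ?_ ?_
      · have := Matrix.posSemidef_self_mul_conjTranspose A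
        rwa [Matrix.conjTranspose_eq_transpose_of_trivial] at this
      · exact Matrix.PosDef.one.smul hαstar
    have hdet : IsUnit M.det := (Matrix.isUnit_iff_isUnit_det M).mp hpd.isUnit
    have hMy : M.mulVec y = v := by
      rw [hy, Matrix.mulVec_mulVec, Matrix.mul_nonsing_inv M hdet, Matrix.one_mulVec]
    have hc : A.mulVec (w - Aᵀ.mulVec y) + b = αstar • y := by
      have hAA : (A * Aᵀ).mulVec y = v - αstar • y := by
        have : (A * Aᵀ).mulVec y = M.mulVec y - (αstar • (1 : Matrix (Fin m) (Fin m) ℝ)).mulVec y := by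
          rw [hM, Matrix.add_mulVec]; abel
        rw [this, hMy, Matrix.smul_mulVec, Matrix.one_mulVec]
      rw [Matrix.mulVec_sub, Matrix.mulVec_mulVec, hAA, hv]
      abel
    have hαy : αstar * norm2 y ^ 2 = αstar * (ν * τ) * norm2 y := by
      rw [hnorm]; ring
    have hk := key A b τ ν hν w y αstar hαstar.le hc (le_of_eq hnorm) hαy u
    have hpos : 0 < 1 / (2 * ν) * norm2 (u - (w - Aᵀ.mulVec y)) ^ 2 := by
      have h1 : u - (w - Aᵀ.mulVec y) ≠ 0 := sub_ne_zero.mpr hne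
      have h2 := norm2_pos_of_ne_zero h1
      positivity
    linarith
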